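/- Let ℓ be a prime, K a complete discrete valuation field of characteristic zero and residue characteristic ℓ with absolute ramification index e = v(ℓ). Suppose A ∈ GL_m(K) is not a scalar matrix but A^ℓ is a scalar matrix. Then m ≥ (ℓ − 1)/e. -/

import Mathlib

open Polynomial

section Aux

variable {O : Type} [CommRing O] [IsDomain O] [IsDiscreteValuationRing O]
  {K : Type} [Field K] [Algebra O K] [IsFractionRing O K]

/-- Lift a monic irreducible factor over `K` of (the image of) a monic polynomial over `O`
to a monic factor over `O`. -/
lemma lift_factor (P : O[X]) (hP : P.Monic) {q : K[X]} (hq : Irreducible q) (hqm : q.Monic)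
    (hdvd : q ∣ P.map (algebraMap O K)) :
    ∃ Q : O[X], Q.Monic ∧ Q.map (algebraMap O K) = q ∧ Q ∣ P := by
  classical
  let Ω := AlgebraicClosure K
  haveI : NoZeroSMulDivisors O Ω := by
    suffices h : Function.Injective (algebraMap O Ω) from
      ⟨fun {c x} hcx => by rw [Algebra.smul_def, mul_eq_zero, map_eq_zero_iff _ h] at hcx; exact hcx⟩
    rw [IsScalarTower.algebraMap_eq O K Ω]
    exact (algebraMap K Ω).injective.comp (IsFractionRing.injective O K)
  obtain ⟨ζ, hζ⟩ : ∃ ζ : Ω, Polynomial.aeval ζ q = 0 := by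
    refine IsAlgClosed.exists_aeval_eq_zero Ω q ?_
    exact (natDegree_pos_iff_degree_pos.mp hq.natDegree_pos).ne'
  have hPζ : Polynomial.aeval ζ P = 0 := by
    obtain ⟨t, ht⟩ := hdvd
    have : Polynomial.aeval ζ (P.map (algebraMap O K)) = 0 := by
      rw [ht, map_mul, hζ, zero_mul]
    rwa [aeval_map_algebraMap] at this
  have hint : IsIntegral O ζ := ⟨P, hP, hPζ⟩
  refine ⟨minpoly O ζ, minpoly.monic hint, ?_, minpoly.isIntegrallyClosed_dvd hint hPζ⟩
  rw [← minpoly.isIntegrallyClosed_eq_field_fractions' K hint]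
  exact (minpoly.eq_of_irreducible_of_monic hq hζ hqm).symm

lemma cyclotomic_charP {k : Type} [Field k] {ℓ : ℕ} (hℓ : ℓ.Prime) [CharP k ℓ] :
    cyclotomic ℓ k = (X - 1) ^ (ℓ - 1) := by
  haveI := Fact.mk hℓ
  have h1 : (X - 1 : k[X]) ^ ℓ = X ^ ℓ - 1 := by
    have := sub_pow_char (R := k[X]) (p := ℓ) (x := X) (y := 1)
    simpa using this
  have h2 : (cyclotomic ℓ k) * (X - 1) = X ^ ℓ - 1 := by
    rw [cyclotomic_prime]; exact geom_sum_mul X ℓ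
  have hX : (X - 1 : k[X]) ≠ 0 := by
    have := X_sub_C_ne_zero (1 : k)
    simpa using this
  apply mul_right_cancel₀ hX
  rw [h2, ← h1, ← pow_succ, Nat.sub_add_cancel hℓ.pos]

lemma eval_one_mem {ℓ : ℕ} (hℓ : ℓ.Prime) (hres : (ℓ : O) ∈ IsLocalRing.maximalIdeal O)
    {Q : O[X]} (hQ : Q.Monic) (hdeg : 0 < Q.natDegree) (hdvd : Q ∣ cyclotomic ℓ O) :
    Q.eval 1 ∈ IsLocalRing.maximalIdeal O := by
  classical
  set k := IsLocalRing.ResidueField O with hk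
  haveI : CharP k ℓ := by
    refine (CharP.charP_iff_prime_eq_zero hℓ).2 ?_
    rw [← map_natCast (IsLocalRing.residue O) ℓ]
    exact (IsLocalRing.residue_eq_zero_iff _).2 hres
  set φ := IsLocalRing.residue O
  have hQ'dvd : Q.map φ ∣ (X - C (1:k)) ^ (ℓ - 1) := by
    have := Polynomial.map_dvd φ hdvd
    rw [map_cyclotomic, cyclotomic_charP hℓ] at this
    simpa using this
  have hQ'unit : ¬ IsUnit (Q.map φ) := by
    intro h
    have := natDegree_eq_zero_of_isUnit h
    rw [hQ.natDegree_map] at this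
    omega
  obtain ⟨i, hi, hass⟩ := (dvd_prime_pow (prime_X_sub_C (1:k)) (ℓ - 1)).1 hQ'dvd
  have hi0 : i ≠ 0 := by
    rintro rfl
    exact hQ'unit (associated_one_iff_isUnit.mp (by simpa using hass))
  have hroot : (X - C (1:k)) ∣ Q.map φ :=
    dvd_trans (dvd_pow_self _ hi0) hass.symm.dvd
  have : (Q.map φ).eval 1 = 0 := by
    have := dvd_iff_isRoot.1 hroot
    exact this
  rw [eval_one_map] at this
  exact (IsLocalRing.residue_eq_zero_iff _).1 this

open UniqueFactorizationMonoid in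
lemma count_lemma [DecidableEq K] {ℓ : ℕ} (hℓ : ℓ.Prime) (hres : (ℓ : O) ∈ IsLocalRing.maximalIdeal O) :
    ∀ n : ℕ, ∀ P : K[X], P.natDegree ≤ n → P.Monic → P ∣ cyclotomic ℓ K →
    ∃ Q : O[X], Q.Monic ∧ Q.map (algebraMap O K) = P ∧
      Q.eval 1 ∈ (IsLocalRing.maximalIdeal O) ^
        (Multiset.card (normalizedFactors P)) := by
  classical
  intro n
  induction n with
  | zero =>
    intro P hdeg hm _
    have hP1 : P = 1 := hm.natDegree_eq_zero.1 (by omega)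
    subst hP1
    exact ⟨1, monic_one, by simp, by simp [normalizedFactors_one]⟩
  | succ n ih =>
    intro P hdeg hm hdvdC
    by_cases h0 : P.natDegree = 0
    · have hP1 : P = 1 := hm.natDegree_eq_zero.1 h0
      subst hP1
      exact ⟨1, monic_one, by simp, by simp [normalizedFactors_one]⟩
    have hPne : P ≠ 0 := hm.ne_zero
    have hPnu : ¬ IsUnit P := fun h => h0 (natDegree_eq_zero_of_isUnit h)
    obtain ⟨q', hq'irr, hq'dvd⟩ := WfDvdMonoid.exists_irreducible_factor hPnu hPne
    have hlcu : IsUnit (C (q'.leadingCoeff)⁻¹) :=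
      isUnit_C.2 (isUnit_iff_ne_zero.2 (inv_ne_zero (leadingCoeff_ne_zero.2 hq'irr.ne_zero)))
    set q := q' * C (q'.leadingCoeff)⁻¹ with hqdef
    have hassoc : Associated q' q := ⟨hlcu.unit, by rw [IsUnit.unit_spec]⟩
    have hqm : q.Monic := monic_mul_leadingCoeff_inv hq'irr.ne_zero
    have hqirr : Irreducible q := hassoc.irreducible hq'irr
    have hqdvdP : q ∣ P := hassoc.symm.dvd.trans hq'dvd
    obtain ⟨P₂, hP₂⟩ := id hqdvdP
    have hP₂m : P₂.Monic := hqm.of_mul_monic_left (hP₂ ▸ hm)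
    have hqdeg : 0 < q.natDegree := hqirr.natDegree_pos
    have hdeg₂ : P₂.natDegree ≤ n := by
      have := natDegree_mul hqirr.ne_zero hP₂m.ne_zero
      rw [← hP₂] at this
      omega
    have hP₂dvd : P₂ ∣ cyclotomic ℓ K := (Dvd.intro_left q hP₂.symm).trans hdvdC
    obtain ⟨Q₂, hQ₂m, hQ₂map, hQ₂mem⟩ := ih P₂ hdeg₂ hP₂m hP₂dvd
    have hqdvdmap : q ∣ (cyclotomic ℓ O).map (algebraMap O K) := by
      rw [map_cyclotomic]; exact hqdvdP.trans hdvdC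
    obtain ⟨Q₁, hQ₁m, hQ₁map, hQ₁dvd⟩ :=
      lift_factor (cyclotomic ℓ O) (cyclotomic.monic ℓ O) hqirr hqm hqdvdmap
    have hQ₁deg : 0 < Q₁.natDegree := by
      have : (Q₁.map (algebraMap O K)).natDegree = Q₁.natDegree := hQ₁m.natDegree_map _
      rw [hQ₁map] at this
      omega
    have hQ₁mem : Q₁.eval 1 ∈ IsLocalRing.maximalIdeal O :=
      eval_one_mem hℓ hres hQ₁m hQ₁deg hQ₁dvd
    refine ⟨Q₁ * Q₂, hQ₁m.mul hQ₂m, by rw [Polynomial.map_mul, hQ₁map, hQ₂map, ← hP₂], ?_⟩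
    have hcard : Multiset.card (normalizedFactors P)
        = 1 + Multiset.card (normalizedFactors P₂) := by
      rw [hP₂, normalizedFactors_mul hqirr.ne_zero hP₂m.ne_zero,
        Multiset.card_add, normalizedFactors_irreducible hqirr]
      simp
    rw [hcard, pow_add, pow_one, eval_mul]
    exact Ideal.mul_mem_mul hQ₁mem hQ₂mem

end Aux

open IntermediateField in
lemma deg_eq {ℓ : ℕ} (hℓ : ℓ.Prime) {K : Type} [Field K] [CharZero K] {q s : K[X]}
    (hq : Irreducible q) (hqm : q.Monic) (hqd : q ∣ cyclotomic ℓ K)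
    (hs : Irreducible s) (hsm : s.Monic) (hsd : s ∣ cyclotomic ℓ K) :
    s.natDegree = q.natDegree := by
  classical
  haveI : NeZero ℓ := ⟨hℓ.ne_zero⟩
  set Ω := AlgebraicClosure K with hΩ
  haveI : NeZero ((ℓ : ℕ) : Ω) := ⟨Nat.cast_ne_zero.2 hℓ.ne_zero⟩
  have key : ∀ t : K[X], Irreducible t → t.Monic → t ∣ cyclotomic ℓ K →
      ∃ ζ : Ω, IsPrimitiveRoot ζ ℓ ∧ t = minpoly K ζ := by
    intro t ht htm htd
    obtain ⟨ζ, hζ⟩ : ∃ ζ : Ω, Polynomial.aeval ζ t = 0 :=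
      IsAlgClosed.exists_aeval_eq_zero Ω t (natDegree_pos_iff_degree_pos.mp ht.natDegree_pos).ne'
    have hcyc : Polynomial.aeval ζ (cyclotomic ℓ K) = 0 := by
      obtain ⟨u, hu⟩ := htd; rw [hu, map_mul, hζ, zero_mul]
    have hprim : IsPrimitiveRoot ζ ℓ := by
      rw [← isRoot_cyclotomic_iff (R := Ω) (n := ℓ)]
      rw [aeval_def, ← eval_map, map_cyclotomic] at hcyc
      exact hcyc
    exact ⟨ζ, hprim, minpoly.eq_of_irreducible_of_monic ht hζ htm⟩
  obtain ⟨ζq, hζqprim, hqmin⟩ := key q hq hqm hqd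
  obtain ⟨ζs, hζsprim, hsmin⟩ := key s hs hsm hsd
  have hint : ∀ ζ : Ω, IsPrimitiveRoot ζ ℓ → IsIntegral K ζ := by
    intro ζ h
    refine ⟨cyclotomic ℓ K, cyclotomic.monic _ _, ?_⟩
    rw [eval₂_eq_eval_map, map_cyclotomic]
    exact (isRoot_cyclotomic_iff).2 h
  have hadj : K⟮ζs⟯ = K⟮ζq⟯ := by
    apply le_antisymm
    · rw [adjoin_simple_le_iff]
      obtain ⟨i, _, hi⟩ := hζqprim.eq_pow_of_pow_eq_one hζsprim.pow_eq_one
      rw [← hi]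
      exact pow_mem (mem_adjoin_simple_self K ζq) i
    · rw [adjoin_simple_le_iff]
      obtain ⟨i, _, hi⟩ := hζsprim.eq_pow_of_pow_eq_one hζqprim.pow_eq_one
      rw [← hi]
      exact pow_mem (mem_adjoin_simple_self K ζs) i
  rw [hqmin, hsmin, ← IntermediateField.adjoin.finrank (hint ζs hζsprim),
    ← IntermediateField.adjoin.finrank (hint ζq hζqprim), hadj]

open UniqueFactorizationMonoid in
lemma lemA {O : Type} [CommRing O] [IsDomain O] [IsDiscreteValuationRing O]
    {K : Type} [Field K] [Algebra O K] [IsFractionRing O K] [CharZero K]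
    {ℓ e : ℕ} (hℓ : ℓ.Prime)
    (hres : (ℓ : O) ∈ IsLocalRing.maximalIdeal O)
    (he : (ℓ : O) ∉ (IsLocalRing.maximalIdeal O) ^ (e + 1))
    {q : K[X]} (hq : Irreducible q) (hqm : q.Monic) (hdvd : q ∣ cyclotomic ℓ K) :
    ℓ - 1 ≤ e * q.natDegree := by
  classical
  haveI := Fact.mk hℓ
  set S := normalizedFactors (cyclotomic ℓ K) with hS
  have hmonS : ∀ s ∈ S, s.Monic := by
    intro s hs
    have h1 := normalize_normalized_factor s hs
    have h2 : s ≠ 0 := (irreducible_of_normalized_factor s hs).ne_zero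
    rw [← h1]
    exact monic_normalize h2
  have hprodmon : S.prod.Monic := by
    have := monic_multiset_prod_of_monic S id hmonS
    simpa using this
  have hprod : S.prod = cyclotomic ℓ K :=
    eq_of_monic_of_associated hprodmon (cyclotomic.monic ℓ K)
      (prod_normalizedFactors (cyclotomic_ne_zero ℓ K))
  have hdegS : ∀ s ∈ S, s.natDegree = q.natDegree := fun s hs =>
    deg_eq hℓ hq hqm hdvd (irreducible_of_normalized_factor s hs) (hmonS s hs)
      (dvd_of_mem_normalizedFactors hs)
  have hsum : ℓ - 1 = Multiset.card S * q.natDegree := by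
    have h1 : (cyclotomic ℓ K).natDegree = ℓ - 1 := by
      rw [natDegree_cyclotomic, Nat.totient_prime hℓ]
    have h0 : (0 : K[X]) ∉ S := fun h =>
      (irreducible_of_normalized_factor 0 h).ne_zero rfl
    have h2 : (cyclotomic ℓ K).natDegree = (S.map natDegree).sum := by
      conv_lhs => rw [← hprod]
      exact natDegree_multiset_prod S h0
    have h3 : S.map natDegree = Multiset.replicate (Multiset.card S) q.natDegree := by
      refine Multiset.eq_replicate.2 ⟨by simp, ?_⟩
      intro b hb
      obtain ⟨s, hs, rfl⟩ := Multiset.mem_map.1 hb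
      exact hdegS s hs
    rw [← h1, h2, h3, Multiset.sum_replicate, smul_eq_mul]
  obtain ⟨Q, hQm, hQmap, hQmem⟩ := count_lemma hℓ hres (cyclotomic ℓ K).natDegree
    (cyclotomic ℓ K) le_rfl (cyclotomic.monic ℓ K) dvd_rfl
  have hQ : Q = cyclotomic ℓ O := by
    apply Polynomial.map_injective (algebraMap O K) (IsFractionRing.injective O K)
    rw [hQmap, map_cyclotomic]
  rw [hQ] at hQmem
  have hev : (cyclotomic ℓ O).eval 1 = (ℓ : O) := by
    simp [eval_one_cyclotomic_prime (R := O) (p := ℓ)]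
  rw [hev] at hQmem
  have hcard : Multiset.card S ≤ e := by
    by_contra h
    push_neg at h
    exact he (Ideal.pow_le_pow_right h hQmem)
  rw [hsum]
  exact Nat.mul_le_mul_right _ hcard

/-- Lemma 3.10: let `K` be a complete discrete valuation field of characteristic zero and
residue characteristic `ℓ`, with absolute ramification index `e`.  If `A ∈ GL_m(K)` is not
a scalar matrix but `A^ℓ` is a scalar matrix, then `m ≥ (ℓ - 1)/e`, i.e. `ℓ - 1 ≤ m·e`. -/
theorem stmt_8 (ℓ e m : ℕ) (hℓ : ℓ.Prime)
    (O : Type) [CommRing O] [IsDomain O] [IsDiscreteValuationRing O]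
    [IsAdicComplete (IsLocalRing.maximalIdeal O) O]
    (K : Type) [Field K] [Algebra O K] [IsFractionRing O K] [CharZero K]
    (hres : (ℓ : O) ∈ IsLocalRing.maximalIdeal O)
    (he : (ℓ : O) ∈ (IsLocalRing.maximalIdeal O) ^ e ∧
          (ℓ : O) ∉ (IsLocalRing.maximalIdeal O) ^ (e + 1))
    (A : GL (Fin m) K)
    (hnotscalar : ¬ ∃ c : K, (A : Matrix (Fin m) (Fin m) K) = c • (1 : Matrix (Fin m) (Fin m) K))
    (hscalar : ∃ c : K, ((A ^ ℓ : GL (Fin m) K) : Matrix (Fin m) (Fin m) K)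
        = c • (1 : Matrix (Fin m) (Fin m) K)) :
    ℓ - 1 ≤ m * e := by
  classical
  haveI := Fact.mk hℓ
  rcases Nat.eq_zero_or_pos m with hm0 | hmpos
  · subst hm0
    exact absurd ⟨0, Subsingleton.elim _ _⟩ hnotscalar
  have hepos : 0 < e := by
    rcases Nat.eq_zero_or_pos e with rfl | h
    · exact absurd (by simpa using hres) (by simpa using he.2)
    · exact h
  haveI : NeZero m := ⟨hmpos.ne'⟩
  haveI : Nontrivial (Matrix (Fin m) (Fin m) K) := inferInstance
  set A' : Matrix (Fin m) (Fin m) K := (A : Matrix (Fin m) (Fin m) K) with hA'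
  obtain ⟨c, hc⟩ := hscalar
  have hcpow : A' ^ ℓ = c • 1 := by
    rw [hA', ← Units.val_pow_eq_pow_val]
    exact hc
  have hAint : IsIntegral K A' := Algebra.IsIntegral.isIntegral A'
  by_cases hroot : ∃ γ : K, γ ^ ℓ = c
  · -- `c` has an `ℓ`-th root `γ`; then `γ⁻¹ • A` has exact order `ℓ`.
    obtain ⟨γ, hγ⟩ := hroot
    have hc0 : c ≠ 0 := by
      intro h
      have h1 := Units.mul_inv (A ^ ℓ)
      rw [hc, h, zero_smul, zero_mul] at h1
      exact one_ne_zero h1.symm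
    have hγ0 : γ ≠ 0 := by
      rintro rfl
      rw [zero_pow hℓ.ne_zero] at hγ
      exact hc0 hγ.symm
    set B : Matrix (Fin m) (Fin m) K := γ⁻¹ • A' with hB
    have hBpow : B ^ ℓ = 1 := by
      rw [hB, _root_.smul_pow, hcpow, ← hγ, smul_smul, inv_pow,
        inv_mul_cancel₀ (pow_ne_zero _ hγ0), one_smul]
    have hBns : ∀ b : K, B ≠ b • 1 := by
      intro b hb
      apply hnotscalar
      refine ⟨γ * b, ?_⟩
      have hAB : A' = γ • B := by rw [hB, smul_smul, mul_inv_cancel₀ hγ0, one_smul]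
      rw [hAB, hb, smul_smul]
    have hBint : IsIntegral K B := Algebra.IsIntegral.isIntegral B
    have hBdvd : minpoly K B ∣ (X ^ ℓ - 1 : K[X]) := by
      refine minpoly.dvd K B ?_
      rw [map_sub, aeval_X_pow, map_one, hBpow, sub_self]
    have hfact : (Polynomial.cyclotomic ℓ K) * (X - 1) = X ^ ℓ - 1 := by
      rw [cyclotomic_prime]; exact geom_sum_mul X ℓ
    have hdeg2 : 2 ≤ (minpoly K B).natDegree := by
      rw [minpoly.two_le_natDegree_iff hBint]
      rintro ⟨b, hb⟩
      exact hBns b (by rw [← hb, Algebra.algebraMap_eq_smul_one])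
    set g := EuclideanDomain.gcd (minpoly K B) (Polynomial.cyclotomic ℓ K) with hg
    have hgdvd1 : g ∣ minpoly K B := EuclideanDomain.gcd_dvd_left _ _
    have hgdvd2 : g ∣ Polynomial.cyclotomic ℓ K := EuclideanDomain.gcd_dvd_right _ _
    have hgnu : ¬ IsUnit g := by
      intro h
      have hcop : IsCoprime (minpoly K B) (Polynomial.cyclotomic ℓ K) :=
        EuclideanDomain.gcd_isUnit_iff.1 h
      have hdvd3 : minpoly K B ∣ (X - 1 : K[X]) := by
        refine hcop.dvd_of_dvd_mul_left ?_
        rw [hfact]; exact hBdvd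
      have h4 := natDegree_le_of_dvd hdvd3 (by
        have := X_sub_C_ne_zero (1 : K); simpa using this)
      have h5 : (X - 1 : K[X]).natDegree ≤ 1 := by
        have := natDegree_X_sub_C (1 : K)
        simp only [map_one] at this
        omega
      omega
    have hgne : g ≠ 0 := by
      intro h
      exact minpoly.ne_zero hBint (EuclideanDomain.gcd_eq_zero_iff.1 h).1
    obtain ⟨q', hq'irr, hq'g⟩ := WfDvdMonoid.exists_irreducible_factor hgnu hgne
    have hlcu : IsUnit (C (q'.leadingCoeff)⁻¹) :=
      isUnit_C.2 (isUnit_iff_ne_zero.2 (inv_ne_zero (leadingCoeff_ne_zero.2 hq'irr.ne_zero)))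
    set q : K[X] := q' * C (q'.leadingCoeff)⁻¹ with hqdef
    have hassoc : Associated q' q := ⟨hlcu.unit, by rw [IsUnit.unit_spec]⟩
    have hqm : q.Monic := monic_mul_leadingCoeff_inv hq'irr.ne_zero
    have hqirr : Irreducible q := hassoc.irreducible hq'irr
    have hqcyc : q ∣ Polynomial.cyclotomic ℓ K := (hassoc.symm.dvd.trans hq'g).trans hgdvd2
    have hqmin : q ∣ minpoly K B := (hassoc.symm.dvd.trans hq'g).trans hgdvd1
    have hqm' : q.natDegree ≤ m := by
      have h1 : q ∣ B.charpoly := hqmin.trans (Matrix.minpoly_dvd_charpoly B)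
      have h2 := natDegree_le_of_dvd h1 (Matrix.charpoly_monic B).ne_zero
      rwa [Matrix.charpoly_natDegree_eq_dim, Fintype.card_fin] at h2
    have hmain := lemA hℓ hres he.2 hqirr hqm hqcyc
    calc ℓ - 1 ≤ e * q.natDegree := hmain
      _ ≤ e * m := Nat.mul_le_mul_left _ hqm'
      _ = m * e := mul_comm _ _
  · -- `X ^ ℓ - c` is irreducible, so the minimal polynomial of `A` has degree `ℓ ≤ m`.
    push_neg at hroot
    have hirr : Irreducible (X ^ ℓ - C c : K[X]) := X_pow_sub_C_irreducible_of_prime hℓ hroot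
    have haev : Polynomial.aeval A' (X ^ ℓ - C c : K[X]) = 0 := by
      rw [map_sub, aeval_X_pow, aeval_C, hcpow, Algebra.algebraMap_eq_smul_one, sub_self]
    have hdvd1 := minpoly.dvd K A' haev
    have hnu : ¬ IsUnit (minpoly K A') := by
      intro h
      have := natDegree_eq_zero_of_isUnit h
      have := minpoly.natDegree_pos hAint
      omega
    obtain ⟨u, hu⟩ := hdvd1
    rcases hirr.isUnit_or_isUnit hu with h | h
    · exact absurd h hnu
    · have hXdeg : (X ^ ℓ - C c : K[X]).natDegree = ℓ := natDegree_X_pow_sub_C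
      have hu0 : u ≠ 0 := by
        rintro rfl
        rw [mul_zero] at hu
        exact (hirr.ne_zero) hu
      have hdegeq : (minpoly K A').natDegree = ℓ := by
        have h1 : (X ^ ℓ - C c : K[X]).natDegree
            = (minpoly K A').natDegree + u.natDegree := by
          rw [hu, natDegree_mul (minpoly.ne_zero hAint) hu0]
        have h2 : u.natDegree = 0 := natDegree_eq_zero_of_isUnit h
        omega
      have hle : ℓ ≤ m := by
        have h2 := Matrix.minpoly_dvd_charpoly A'
        have h3 := natDegree_le_of_dvd h2 (Matrix.charpoly_monic A').ne_zero
        rwa [Matrix.charpoly_natDegree_eq_dim, Fintype.card_fin, hdegeq] at h3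
      calc ℓ - 1 ≤ m := by omega
        _ = m * 1 := (mul_one m).symm
        _ ≤ m * e := Nat.mul_le_mul_left _ hepos
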